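/- Let R be a positive semidefinite matrix and C a closed set of positive semidefinite matrices containing states (here, the invariant matrices under a finite unitary group action). Then min over S in C of B(R,S)² equals Tr(R) − max over unit-trace σ in C of F(R,σ). Moreover, if τ attains the fidelity maximum, then T = F(R,τ)·τ attains the Bures minimum. -/

import Mathlib

open Matrix
open scoped ComplexOrder Classical

variable {n : Type*} [Fintype n] [DecidableEq n]

/-- The positive semidefinite square root of a matrix (junk value `0` if not PSD). -/
noncomputable def msqrt (A : Matrix n n ℂ) : Matrix n n ℂ :=
  if h : A.PosSemidef then
    (h.1.eigenvectorUnitary : Matrix n n ℂ) * diagonal ((↑) ∘ Real.sqrt ∘ h.1.eigenvalues) *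
      (star h.1.eigenvectorUnitary : Matrix n n ℂ) else 0

/-- The trace norm `‖M‖₁ = Tr √(Mᴴ M)`. -/
noncomputable def traceNorm (M : Matrix n n ℂ) : ℝ :=
  ((msqrt (Mᴴ * M)).trace).re

/-- The fidelity `F(R,S) = (Tr √(√R S √R))²` of positive semidefinite matrices. -/
noncomputable def fidelity (R S : Matrix n n ℂ) : ℝ :=
  (((msqrt (msqrt R * S * msqrt R)).trace).re) ^ 2

/-- The squared Bures distance `B(R,S)² = Tr R + Tr S - 2 √F(R,S)`. -/
noncomputable def bures2 (R S : Matrix n n ℂ) : ℝ :=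
  (R.trace).re + (S.trace).re - 2 * Real.sqrt (fidelity R S)

/-- The twirling map `𝓔(X) = (1/|G|) ∑ g, U g * X * (U g)ᴴ`. -/
noncomputable def twirl {G : Type*} [Fintype G] (U : G → Matrix n n ℂ)
    (X : Matrix n n ℂ) : Matrix n n ℂ :=
  (Fintype.card G : ℂ)⁻¹ • ∑ g, U g * X * (U g)ᴴ

/-- The maximum eigenvalue of a Hermitian matrix. -/
noncomputable def lamMax {A : Matrix n n ℂ} (hA : A.IsHermitian) : ℝ :=
  ⨆ i, hA.eigenvalues i

/-- The minimum eigenvalue of a Hermitian matrix. -/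
noncomputable def lamMin {A : Matrix n n ℂ} (hA : A.IsHermitian) : ℝ :=
  ⨅ i, hA.eigenvalues i

/-- The fixed point iteration map `K(S) = S^{-1/2} (𝓔((S^{1/2} R S^{1/2})^{1/2}))² S^{-1/2}`. -/
noncomputable def iterMap {G : Type*} [Fintype G] (U : G → Matrix n n ℂ)
    (R S : Matrix n n ℂ) : Matrix n n ℂ :=
  (msqrt S)⁻¹ * (twirl U (msqrt (msqrt S * R * msqrt S))) ^ 2 * (msqrt S)⁻¹

set_option linter.unusedSectionVars false

open scoped MatrixOrder

lemma msqrt_of_psd {A : Matrix n n ℂ} (h : A.PosSemidef) : msqrt A = CFC.sqrt A := by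
  rw [msqrt, dif_pos h, CFC.sqrt_eq_cfc, cfc_nnreal_eq_real _ A, h.1.cfc_eq]
  simp only [IsHermitian.cfc, Unitary.conjStarAlgAut_apply]
  congr 3
  funext i
  simp [Real.coe_sqrt, max_eq_left (h.eigenvalues_nonneg i)]

lemma psd_eq_sqrt_of_sq_eq {A B : Matrix n n ℂ} (hB : B.PosSemidef) (hA : A.PosSemidef)
    (h : B ^ 2 = A) : B = CFC.sqrt A :=
  ((CFC.sqrt_eq_iff A B hA.nonneg hB.nonneg).mpr (by rw [← sq]; exact h)).symm

lemma psd_smul {A : Matrix n n ℂ} (hA : A.PosSemidef) {k : ℝ} (hk : 0 ≤ k) :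
    ((k : ℂ) • A).PosSemidef := by
  constructor
  · unfold Matrix.IsHermitian
    rw [conjTranspose_smul, hA.1.eq]
    congr 1
    simp [Complex.ext_iff]
  · intro x
    exact (hA.smul (Complex.zero_le_real.2 hk)).2 x

lemma msqrt_zero : msqrt (0 : Matrix n n ℂ) = 0 := by
  rw [msqrt_of_psd Matrix.PosSemidef.zero]
  symm
  exact psd_eq_sqrt_of_sq_eq .zero .zero (by simp)

lemma msqrt_smul {A : Matrix n n ℂ} (hA : A.PosSemidef) {k : ℝ} (hk : 0 ≤ k) :
    msqrt ((k : ℂ) • A) = ((Real.sqrt k : ℝ) : ℂ) • msqrt A := by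
  rw [msqrt_of_psd (psd_smul hA hk), msqrt_of_psd hA]
  symm
  refine psd_eq_sqrt_of_sq_eq (psd_smul (CFC.sqrt_nonneg A).posSemidef (Real.sqrt_nonneg k)) (psd_smul hA hk) ?_
  rw [smul_pow, CFC.sq_sqrt A hA.nonneg]
  congr 1
  rw [← Complex.ofReal_pow, Real.sq_sqrt hk]

lemma fidelity_zero (R : Matrix n n ℂ) : fidelity R 0 = 0 := by
  simp [fidelity, msqrt_zero]

lemma fidelity_smul (R : Matrix n n ℂ) {S : Matrix n n ℂ} (hS : S.PosSemidef)
    {k : ℝ} (hk : 0 ≤ k) : fidelity R ((k : ℂ) • S) = k * fidelity R S := by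
  by_cases hR : R.PosSemidef
  · have h1 : msqrt R * ((k:ℂ) • S) * msqrt R = (k:ℂ) • (msqrt R * S * msqrt R) := by
      simp [Matrix.mul_smul, Matrix.smul_mul]
    have hpsd : (msqrt R * S * msqrt R).PosSemidef := by
      rw [msqrt_of_psd hR]
      have := hS.conjTranspose_mul_mul_same (B := CFC.sqrt R)
      rwa [(CFC.sqrt_nonneg R).posSemidef.1.eq] at this
    rw [fidelity, h1, msqrt_smul hpsd hk, trace_smul, smul_eq_mul]
    have : (((Real.sqrt k : ℝ) : ℂ) * (msqrt (msqrt R * S * msqrt R)).trace).re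
        = Real.sqrt k * ((msqrt (msqrt R * S * msqrt R)).trace).re := by
      simp [Complex.re_ofReal_mul]
    rw [fidelity, this, mul_pow, Real.sq_sqrt hk]
  · have hmR : msqrt R = 0 := dif_neg hR
    simp [fidelity, hmR, msqrt_zero]

lemma twirl_smul {G : Type*} [Fintype G] (U : G → Matrix n n ℂ) (c : ℂ) (X : Matrix n n ℂ) :
    twirl U (c • X) = c • twirl U X := by
  simp [twirl, Matrix.mul_smul, Matrix.smul_mul, Finset.smul_sum, smul_comm c]

lemma twirl_zero {G : Type*} [Fintype G] (U : G → Matrix n n ℂ) :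
    twirl U (0 : Matrix n n ℂ) = 0 := by
  simp [twirl]

lemma psd_diag_nonneg {S : Matrix n n ℂ} (hS : S.PosSemidef) (i : n) : 0 ≤ S i i := by
  exact hS.diag_nonneg

lemma psd_trace_real {S : Matrix n n ℂ} (hS : S.PosSemidef) :
    S.trace = ((S.trace).re : ℂ) := by
  have : ∀ i, S i i = ((S i i).re : ℂ) := fun i => by
    have h := psd_diag_nonneg hS i
    rw [Complex.nonneg_iff] at h
    exact Complex.ext rfl (by simpa using h.2.symm)
  refine Complex.ext (by simp) ?_
  simp only [Complex.ofReal_im]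
  rw [Matrix.trace, Complex.im_sum]
  refine Finset.sum_eq_zero fun i _ => ?_
  have h := psd_diag_nonneg hS i
  rw [Complex.nonneg_iff] at h
  exact h.2.symm

lemma psd_trace_re_nonneg {S : Matrix n n ℂ} (hS : S.PosSemidef) : 0 ≤ (S.trace).re := by
  rw [Matrix.trace, Complex.re_sum]
  exact Finset.sum_nonneg fun i _ => (Complex.nonneg_iff.mp (psd_diag_nonneg hS i)).1

lemma psd_trace_eq_zero {S : Matrix n n ℂ} (hS : S.PosSemidef) (h : S.trace = 0) : S = 0 := by
  obtain ⟨B, rfl⟩ := CStarAlgebra.nonneg_iff_eq_star_mul_self.mp hS.nonneg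
  simp only [star_eq_conjTranspose] at h ⊢
  rw [Matrix.conjTranspose_mul_self_eq_zero]
  have htr : ((Bᴴ * B).trace).re = ∑ i, ∑ j, Complex.normSq (B j i) := by
    rw [Matrix.trace, Complex.re_sum]
    refine Finset.sum_congr rfl fun i _ => ?_
    rw [Matrix.diag, Matrix.mul_apply, Complex.re_sum]
    refine Finset.sum_congr rfl fun j _ => ?_
    simp [Matrix.conjTranspose_apply, Complex.normSq_apply, Complex.mul_re]
  rw [h] at htr
  have hz : ∀ i ∈ Finset.univ, ∀ j ∈ Finset.univ, Complex.normSq ((B : Matrix n n ℂ) j i) = 0 := by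
    have := (Finset.sum_eq_zero_iff_of_nonneg (fun i _ =>
      Finset.sum_nonneg fun j _ => Complex.normSq_nonneg _)).mp htr.symm
    intro i hi j hj
    exact (Finset.sum_eq_zero_iff_of_nonneg fun j _ => Complex.normSq_nonneg _).mp (this i hi) j hj
  ext j i
  simpa using Complex.normSq_eq_zero.mp (hz i (Finset.mem_univ i) j (Finset.mem_univ j))

lemma psd_diag_real {A : Matrix n n ℂ} (hA : A.PosSemidef) (i : n) :
    A i i = ((A i i).re : ℂ) := by
  have h := psd_diag_nonneg hA i
  rw [Complex.nonneg_iff] at h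
  exact Complex.ext rfl (by simpa using h.2.symm)

lemma trace_msqrt_sq_le {P : Matrix n n ℂ} (hP : P.PosSemidef) :
    (((msqrt P).trace).re) ^ 2 ≤ (Fintype.card n : ℝ) * (P.trace).re := by
  set B := msqrt P with hBdef
  have hB : B.PosSemidef := by rw [hBdef, msqrt_of_psd hP]; exact (CFC.sqrt_nonneg P).posSemidef
  have hB2 : B * B = P := by rw [hBdef, msqrt_of_psd hP]; exact CFC.sqrt_mul_sqrt_self P hP.nonneg
  have herm : ∀ i j, B j i = (starRingEnd ℂ) (B i j) := fun i j => by
    conv_lhs => rw [← hB.1.eq]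
    simp [Matrix.conjTranspose_apply]
  have htrP : (P.trace).re = ∑ i, ∑ j, Complex.normSq (B i j) := by
    rw [← hB2, Matrix.trace, Complex.re_sum]
    refine Finset.sum_congr rfl fun i _ => ?_
    rw [Matrix.diag, Matrix.mul_apply, Complex.re_sum]
    refine Finset.sum_congr rfl fun j _ => ?_
    rw [herm i j, Complex.mul_conj]
    simp
  have htrB : (B.trace).re = ∑ i, (B i i).re := by rw [Matrix.trace, Complex.re_sum]; rfl
  rw [htrB, htrP]
  calc (∑ i, (B i i).re) ^ 2 ≤ (Fintype.card n : ℝ) * ∑ i, ((B i i).re) ^ 2 := by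
        simpa using sq_sum_le_card_mul_sum_sq (s := Finset.univ) (f := fun i => (B i i).re)
    _ ≤ (Fintype.card n : ℝ) * ∑ i, ∑ j, Complex.normSq (B i j) := by
        refine mul_le_mul_of_nonneg_left (Finset.sum_le_sum fun i _ => ?_) (by positivity)
        have : ((B i i).re) ^ 2 = Complex.normSq (B i i) := by
          rw [Complex.normSq_apply]
          have := psd_diag_real hB i
          rw [this]
          simp [pow_two]
        rw [this]
        exact Finset.single_le_sum (f := fun j => Complex.normSq (B i j))
          (fun j _ => Complex.normSq_nonneg _) (Finset.mem_univ i)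

lemma psd_entry_sq_le {A : Matrix n n ℂ} (hA : A.PosSemidef) (i j : n) :
    Complex.normSq (A i j) ≤ (A i i).re * (A j j).re := by
  by_cases hij : i = j
  · subst hij
    rw [Complex.normSq_apply, psd_diag_real hA i]
    simp
  · set m := A i j with hm
    set α := (A i i).re with hα
    set β := (A j j).re with hβ
    have hji : A j i = (starRingEnd ℂ) m := by
      conv_lhs => rw [← hA.1.eq]
      simp [Matrix.conjTranspose_apply]
      rfl
    have key : ∀ t : ℝ, 0 ≤ α * (t * t) + (-(2 * Complex.normSq m)) * t + Complex.normSq m * β := by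
      intro t
      set x : n → ℂ := fun l => if l = i then (t : ℂ) else if l = j then -(starRingEnd ℂ) m else 0
        with hx
      have h := hA.dotProduct_mulVec_nonneg x
      have hAx : ∀ k, (A *ᵥ x) k = A k i * (t:ℂ) + A k j * (-(starRingEnd ℂ) m) := by
        intro k
        have hterm : ∀ l, A k l * x l =
            (if l = i then A k i * (t:ℂ) else 0) + (if l = j then A k j * (-(starRingEnd ℂ) m) else 0) := by
          intro l
          by_cases hli : l = i
          · subst hli
            simp [hx, hij]
          · by_cases hlj : l = j
            · subst hlj
              simp [hx, hli]
            · simp [hx, hli, hlj]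
        simp only [mulVec, dotProduct]
        rw [Finset.sum_congr rfl (fun l _ => hterm l), Finset.sum_add_distrib,
          Finset.sum_ite_eq' Finset.univ, Finset.sum_ite_eq' Finset.univ]
        simp
      have hsx : ∀ l, star x l = if l = i then (t : ℂ) else if l = j then -m else 0 := by
        intro l
        by_cases hli : l = i
        · subst hli; simp [hx]
        · by_cases hlj : l = j
          · subst hlj; simp [hx, hli]
          · simp [hx, hli, hlj]
      have hdot : dotProduct (star x) (A *ᵥ x) = (t:ℂ) * (A *ᵥ x) i + (-m) * (A *ᵥ x) j := by
        have hterm : ∀ l, star x l * (A *ᵥ x) l =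
            (if l = i then (t:ℂ) * (A *ᵥ x) i else 0) + (if l = j then (-m) * (A *ᵥ x) j else 0) := by
          intro l
          by_cases hli : l = i
          · subst hli; simp [hsx l, hij]
          · by_cases hlj : l = j
            · subst hlj; simp [hsx l, hli]
            · simp [hsx l, hli, hlj]
        rw [dotProduct, Finset.sum_congr rfl (fun l _ => hterm l), Finset.sum_add_distrib,
          Finset.sum_ite_eq' Finset.univ, Finset.sum_ite_eq' Finset.univ]
        simp
      have hval : dotProduct (star x) (A *ᵥ x)
          = ((α * (t * t) + (-(2 * Complex.normSq m)) * t + Complex.normSq m * β : ℝ) : ℂ) := by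
        rw [hdot, hAx i, hAx j, hji, ← hm, psd_diag_real hA i, psd_diag_real hA j, ← hα, ← hβ]
        have h1 : m * (starRingEnd ℂ) m = (Complex.normSq m : ℂ) := Complex.mul_conj m
        push_cast
        linear_combination ((β : ℂ) - 2 * (t : ℂ)) * h1
      rw [hval] at h
      exact Complex.zero_le_real.mp h
    have hd := discrim_le_zero key
    rw [discrim] at hd
    have hα0 : 0 ≤ α := (Complex.nonneg_iff.mp (psd_diag_nonneg hA i)).1
    have hβ0 : 0 ≤ β := (Complex.nonneg_iff.mp (psd_diag_nonneg hA j)).1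
    have hq : Complex.normSq m * Complex.normSq m ≤ Complex.normSq m * (α * β) := by
      nlinarith [hd]
    rcases eq_or_lt_of_le (Complex.normSq_nonneg m) with h0 | h0
    · rw [← h0]; exact mul_nonneg hα0 hβ0
    · exact le_of_mul_le_mul_left hq h0

lemma psd_trace_mul_le {A B : Matrix n n ℂ} (hA : A.PosSemidef) (hB : B.PosSemidef) :
    ((A * B).trace).re ≤ (A.trace).re * (B.trace).re := by
  have step1 : ((A * B).trace).re ≤ ∑ i, ∑ j, Real.sqrt ((A i i).re * (B i i).re)
      * Real.sqrt ((A j j).re * (B j j).re) := by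
    rw [Matrix.trace, Complex.re_sum]
    refine Finset.sum_le_sum fun i _ => ?_
    rw [Matrix.diag, Matrix.mul_apply, Complex.re_sum]
    refine Finset.sum_le_sum fun j _ => ?_
    calc (A i j * B j i).re ≤ ‖A i j * B j i‖ := Complex.re_le_norm _
      _ = ‖A i j‖ * ‖B j i‖ := norm_mul _ _
      _ = Real.sqrt (Complex.normSq (A i j)) * Real.sqrt (Complex.normSq (B j i)) := by
          rw [Complex.norm_def, Complex.norm_def]
      _ ≤ Real.sqrt ((A i i).re * (A j j).re) * Real.sqrt ((B j j).re * (B i i).re) := by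
          gcongr
          · exact psd_entry_sq_le hA i j
          · exact psd_entry_sq_le hB j i
      _ = Real.sqrt ((A i i).re * (B i i).re) * Real.sqrt ((A j j).re * (B j j).re) := by
          have h1 : 0 ≤ (A i i).re := (Complex.nonneg_iff.mp (psd_diag_nonneg hA i)).1
          have h2 : 0 ≤ (A j j).re := (Complex.nonneg_iff.mp (psd_diag_nonneg hA j)).1
          have h3 : 0 ≤ (B i i).re := (Complex.nonneg_iff.mp (psd_diag_nonneg hB i)).1
          rw [← Real.sqrt_mul (mul_nonneg h1 h2), ← Real.sqrt_mul (mul_nonneg h1 h3)]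
          congr 1
          ring
  have step2 : (∑ i, Real.sqrt ((A i i).re * (B i i).re)) ^ 2
      ≤ (∑ i, (A i i).re) * ∑ i, (B i i).re := by
    refine Finset.sum_sq_le_sum_mul_sum_of_sq_eq_mul Finset.univ
      (fun i _ => (Complex.nonneg_iff.mp (psd_diag_nonneg hA i)).1)
      (fun i _ => (Complex.nonneg_iff.mp (psd_diag_nonneg hB i)).1)
      (fun i _ => Real.sq_sqrt (mul_nonneg (Complex.nonneg_iff.mp (psd_diag_nonneg hA i)).1
        (Complex.nonneg_iff.mp (psd_diag_nonneg hB i)).1))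
  calc ((A * B).trace).re ≤ ∑ i, ∑ j, Real.sqrt ((A i i).re * (B i i).re)
        * Real.sqrt ((A j j).re * (B j j).re) := step1
    _ = (∑ i, Real.sqrt ((A i i).re * (B i i).re)) ^ 2 := by
        rw [sq, Finset.sum_mul]
        exact Finset.sum_congr rfl fun i _ => by rw [← Finset.mul_sum]
    _ ≤ (∑ i, (A i i).re) * ∑ i, (B i i).re := step2
    _ = (A.trace).re * (B.trace).re := by rw [Matrix.trace, Matrix.trace, Complex.re_sum, Complex.re_sum]; rfl

lemma fidelity_nonneg (R S : Matrix n n ℂ) : 0 ≤ fidelity R S := sq_nonneg _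

lemma fidelity_le_bound {R σ : Matrix n n ℂ} (hR : R.PosSemidef) (hσ : σ.PosSemidef) :
    fidelity R σ ≤ (Fintype.card n : ℝ) * ((R.trace).re * (σ.trace).re) := by
  have hpsd : (msqrt R * σ * msqrt R).PosSemidef := by
    rw [msqrt_of_psd hR]
    have := hσ.conjTranspose_mul_mul_same (B := CFC.sqrt R)
    rwa [(CFC.sqrt_nonneg R).posSemidef.1.eq] at this
  have h1 : fidelity R σ ≤ (Fintype.card n : ℝ) * ((msqrt R * σ * msqrt R).trace).re :=
    trace_msqrt_sq_le hpsd
  have h2 : (msqrt R * σ * msqrt R).trace = (R * σ).trace := by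
    rw [Matrix.trace_mul_cycle, msqrt_of_psd hR, CFC.sqrt_mul_sqrt_self R hR.nonneg]
  refine h1.trans ?_
  rw [h2]
  exact mul_le_mul_of_nonneg_left (psd_trace_mul_le hR hσ) (by positivity)

lemma bures2_scaled {R σ : Matrix n n ℂ} (hσ : σ.PosSemidef) (hτ : σ.trace = 1)
    {k : ℝ} (hk : 0 ≤ k) :
    bures2 R ((k : ℂ) • σ) = (R.trace).re + k - 2 * Real.sqrt (k * fidelity R σ) := by
  rw [bures2, fidelity_smul R hσ hk, Matrix.trace_smul, hτ]
  norm_num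

lemma key_ineq {c k f : ℝ} (hk : 0 ≤ k) (hf : 0 ≤ f) :
    c - f ≤ c + k - 2 * Real.sqrt (k * f) := by
  rw [Real.sqrt_mul hk]
  nlinarith [sq_nonneg (Real.sqrt k - Real.sqrt f), Real.sq_sqrt hk, Real.sq_sqrt hf,
    Real.sqrt_nonneg k, Real.sqrt_nonneg f]

lemma bures2_opt {R σ : Matrix n n ℂ} (hσ : σ.PosSemidef) (hτ : σ.trace = 1) :
    bures2 R (((fidelity R σ : ℝ) : ℂ) • σ) = (R.trace).re - fidelity R σ := by
  rw [bures2_scaled hσ hτ (fidelity_nonneg R σ),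
    Real.sqrt_mul_self (fidelity_nonneg R σ)]
  ring

lemma bures2_zero (R : Matrix n n ℂ) : bures2 R 0 = (R.trace).re := by
  simp [bures2, fidelity_zero]

lemma lower_aux {G : Type*} [Fintype G] (U : G → Matrix n n ℂ) (R : Matrix n n ℂ)
    {S : Matrix n n ℂ} (hS : S.PosSemidef) (hSinv : twirl U S = S) (hSne : S.trace ≠ 0) :
    ∃ σ : Matrix n n ℂ, σ.PosSemidef ∧ twirl U σ = σ ∧ σ.trace = 1 ∧
      bures2 R S = (R.trace).re + (S.trace).re
        - 2 * Real.sqrt ((S.trace).re * fidelity R σ) := by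
  set t := (S.trace).re with htdef
  have htr : S.trace = (t : ℂ) := psd_trace_real hS
  have ht0 : 0 ≤ t := psd_trace_re_nonneg hS
  have htne : t ≠ 0 := fun h => hSne (by rw [htr, h]; simp)
  set σ := ((t⁻¹ : ℝ) : ℂ) • S with hσdef
  have hσ : σ.PosSemidef := psd_smul hS (by positivity)
  have hσinv : twirl U σ = σ := by rw [hσdef, twirl_smul, hSinv]
  have hσtr : σ.trace = 1 := by
    rw [hσdef, Matrix.trace_smul, htr, smul_eq_mul, ← Complex.ofReal_mul,
      inv_mul_cancel₀ htne, Complex.ofReal_one]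
  have hback : S = ((t : ℝ) : ℂ) • σ := by
    rw [hσdef, smul_smul, ← Complex.ofReal_mul, mul_inv_cancel₀ htne, Complex.ofReal_one, one_smul]
  refine ⟨σ, hσ, hσinv, hσtr, ?_⟩
  conv_lhs => rw [hback]
  rw [bures2_scaled hσ hσtr ht0]

lemma lower_bound {G : Type*} [Fintype G] (U : G → Matrix n n ℂ) (R : Matrix n n ℂ)
    {S : Matrix n n ℂ} (hS : S.PosSemidef) (hSinv : twirl U S = S) {fbar : ℝ}
    (hfb0 : 0 ≤ fbar)
    (hfb : ∀ σ : Matrix n n ℂ, σ.PosSemidef → twirl U σ = σ → σ.trace = 1 →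
      fidelity R σ ≤ fbar) :
    (R.trace).re - fbar ≤ bures2 R S := by
  by_cases h0 : S.trace = 0
  · rw [psd_trace_eq_zero hS h0, bures2_zero]
    linarith
  · obtain ⟨σ, h1, h2, h3, h4⟩ := lower_aux U R hS hSinv h0
    rw [h4]
    have hk := key_ineq (c := (R.trace).re) (psd_trace_re_nonneg hS) (fidelity_nonneg R σ)
    have := hfb σ h1 h2 h3
    linarith


/-- the Bures minimum over invariant PSD matrices equals
`Tr R − max F(R,σ)` over invariant states `σ`, and if `τ` attains the fidelity maximum then
`T = F(R,τ) τ` attains the Bures minimum. -/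
theorem bures_min_eq_trace_sub_fidelity_max {G : Type*} [Fintype G]
    (U : G → Matrix n n ℂ) (hU : ∀ g, U g ∈ Matrix.unitaryGroup n ℂ)
    (R : Matrix n n ℂ) (hR : R.PosSemidef) :
    sInf {b : ℝ | ∃ S : Matrix n n ℂ, S.PosSemidef ∧ twirl U S = S ∧ b = bures2 R S} =
      (R.trace).re -
        sSup {f : ℝ | ∃ σ : Matrix n n ℂ,
          σ.PosSemidef ∧ twirl U σ = σ ∧ σ.trace = 1 ∧ f = fidelity R σ} ∧
    ∀ τ : Matrix n n ℂ, τ.PosSemidef → twirl U τ = τ → τ.trace = 1 →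
      (∀ σ : Matrix n n ℂ, σ.PosSemidef → twirl U σ = σ → σ.trace = 1 →
        fidelity R σ ≤ fidelity R τ) →
      ∀ S : Matrix n n ℂ, S.PosSemidef → twirl U S = S →
        bures2 R (((fidelity R τ : ℝ) : ℂ) • τ) ≤ bures2 R S := by
  set Sset := {b : ℝ | ∃ S : Matrix n n ℂ, S.PosSemidef ∧ twirl U S = S ∧ b = bures2 R S}
    with hSsetdef
  set Fset := {f : ℝ | ∃ σ : Matrix n n ℂ,
      σ.PosSemidef ∧ twirl U σ = σ ∧ σ.trace = 1 ∧ f = fidelity R σ} with hFsetdef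
  constructor
  · by_cases hex : ∃ σ : Matrix n n ℂ, σ.PosSemidef ∧ twirl U σ = σ ∧ σ.trace = 1
    · obtain ⟨σ₀, hσ₀, hσ₀inv, hσ₀tr⟩ := hex
      have hFne : Fset.Nonempty := ⟨fidelity R σ₀, σ₀, hσ₀, hσ₀inv, hσ₀tr, rfl⟩
      have hbdd : BddAbove Fset := by
        refine ⟨(Fintype.card n : ℝ) * ((R.trace).re * 1), ?_⟩
        rintro f ⟨σ, h1, h2, h3, rfl⟩
        have := fidelity_le_bound hR h1
        rwa [h3, Complex.one_re] at this
      set F := sSup Fset with hFdef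
      have hF0 : 0 ≤ F :=
        le_trans (fidelity_nonneg R σ₀) (le_csSup hbdd ⟨σ₀, hσ₀, hσ₀inv, hσ₀tr, rfl⟩)
      have hfb : ∀ σ : Matrix n n ℂ, σ.PosSemidef → twirl U σ = σ → σ.trace = 1 →
          fidelity R σ ≤ F := fun σ a b c => le_csSup hbdd ⟨σ, a, b, c, rfl⟩
      have hlb : ∀ b ∈ Sset, (R.trace).re - F ≤ b := by
        rintro b ⟨S, hS, hSinv, rfl⟩
        exact lower_bound U R hS hSinv hF0 hfb
      have hSne' : Sset.Nonempty := ⟨bures2 R 0, 0, .zero, twirl_zero U, rfl⟩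
      refine le_antisymm ?_ (le_csInf hSne' hlb)
      have hkey : ∀ f ∈ Fset, f ≤ (R.trace).re - sInf Sset := by
        rintro f ⟨σ, h1, h2, h3, rfl⟩
        have hmem : bures2 R (((fidelity R σ : ℝ) : ℂ) • σ) ∈ Sset :=
          ⟨_, psd_smul h1 (fidelity_nonneg R σ), by rw [twirl_smul, h2], rfl⟩
        have hle := csInf_le ⟨(R.trace).re - F, hlb⟩ hmem
        rw [bures2_opt h1 h3] at hle
        linarith
      have := csSup_le hFne hkey
      linarith
    · have hFempty : Fset = ∅ := by
        ext f
        simp only [hFsetdef, Set.mem_setOf_eq, Set.mem_empty_iff_false, iff_false]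
        rintro ⟨σ, h1, h2, h3, rfl⟩
        exact hex ⟨σ, h1, h2, h3⟩
      rw [hFempty, Real.sSup_empty, sub_zero]
      have hSeq : Sset = {(R.trace).re} := by
        ext b
        simp only [hSsetdef, Set.mem_setOf_eq, Set.mem_singleton_iff]
        constructor
        · rintro ⟨S, hS, hSinv, rfl⟩
          by_cases h0 : S.trace = 0
          · rw [psd_trace_eq_zero hS h0, bures2_zero]
          · obtain ⟨σ, h1, h2, h3, _⟩ := lower_aux U R hS hSinv h0
            exact absurd ⟨σ, h1, h2, h3⟩ hex
        · rintro rfl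
          exact ⟨0, .zero, twirl_zero U, (bures2_zero R).symm⟩
      rw [hSeq, csInf_singleton]
  · intro τ hτ hτinv hτtr hmax S hS hSinv
    rw [bures2_opt hτ hτtr]
    exact lower_bound U R hS hSinv (fidelity_nonneg R τ) hmax
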